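/- For proper cones C1 and C2, the dual of the minimal tensor product equals the maximal tensor product of the duals: (C1 ⊙ C2)* = C1* ⊛ C2*. -/

import Mathlib

set_option synthInstance.maxHeartbeats 400000
set_option maxHeartbeats 1000000

open scoped TensorProduct
open TensorProduct

section Defs

variable {V V' V1 V2 : Type*}
  [AddCommGroup V] [Module ℝ V] [AddCommGroup V'] [Module ℝ V']
  [AddCommGroup V1] [Module ℝ V1] [AddCommGroup V2] [Module ℝ V2]

/-- The dual cone of a set `C`: linear functionals nonnegative on `C`. -/
def dualCone (C : Set V) : Set (Module.Dual ℝ V) := {f | ∀ x ∈ C, 0 ≤ f x}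

/-- The functional `f ⊗ g` on `V1 ⊗ V2`. -/
noncomputable def pairTensor (f : Module.Dual ℝ V1) (g : Module.Dual ℝ V2) :
    Module.Dual ℝ (V1 ⊗[ℝ] V2) :=
  (TensorProduct.lid ℝ ℝ).toLinearMap ∘ₗ TensorProduct.map f g

/-- The minimal tensor product of two cones: the convex hull of the product tensors. -/
def minTensor (C1 : Set V1) (C2 : Set V2) : Set (V1 ⊗[ℝ] V2) :=
  convexHull ℝ {z | ∃ x ∈ C1, ∃ y ∈ C2, z = x ⊗ₜ[ℝ] y}

/-- The maximal tensor product of two cones: tensors nonnegative on product functionals. -/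
def maxTensor (C1 : Set V1) (C2 : Set V2) : Set (V1 ⊗[ℝ] V2) :=
  {z | ∀ f ∈ dualCone C1, ∀ g ∈ dualCone C2, 0 ≤ pairTensor f g z}

/-- A cone: a set closed under multiplication by nonnegative scalars. -/
def IsConeSet (C : Set V) : Prop := ∀ x ∈ C, ∀ a : ℝ, 0 ≤ a → a • x ∈ C

/-- Topological closedness of a subset of a finite-dimensional real vector space,
expressed through (all) linear identifications with `Fin n → ℝ`. -/
def IsClosedSet (C : Set V) : Prop := ∀ (n : ℕ) (e : V ≃ₗ[ℝ] (Fin n → ℝ)), IsClosed (e '' C)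

/-- A proper cone: convex, closed, salient and generating. -/
def IsProperCone (C : Set V) : Prop :=
  Convex ℝ C ∧ IsClosedSet C ∧ IsConeSet C ∧ C ∩ (-C) = {0} ∧ Submodule.span ℝ C = ⊤

/-- A classical cone: the set of vectors with nonnegative coordinates in some basis,
i.e. the cone generated by a basis of the space. -/
def IsClassicalCone (C : Set V) : Prop :=
  ∃ (ι : Type) (b : Module.Basis ι ℝ V), C = {x | ∀ i, 0 ≤ b.repr x i}

/-- `C'` is a retract of `C` if there are positive maps `Φ, Ψ` with `Φ ∘ Ψ = id`. -/
def IsRetractOf (C' : Set V') (C : Set V) : Prop :=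
  ∃ (Φ : V →ₗ[ℝ] V') (Ψ : V' →ₗ[ℝ] V),
    (∀ x ∈ C, Φ x ∈ C') ∧ (∀ y ∈ C', Ψ y ∈ C) ∧ Φ ∘ₗ Ψ = LinearMap.id

/-- A polyhedral cone: the conical hull of finitely many vectors. -/
def IsPolyhedralCone (C : Set V) : Prop :=
  ∃ (k : ℕ) (v : Fin k → V),
    C = {x | ∃ c : Fin k → ℝ, (∀ i, 0 ≤ c i) ∧ x = ∑ i, c i • v i}

end Defs

lemma zero_mem_proper {V : Type*} [AddCommGroup V] [Module ℝ V] {C : Set V}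
    (h : IsProperCone C) : (0 : V) ∈ C := by
  have := h.2.2.2.1
  have h0 : (0 : V) ∈ C ∩ (-C) := by rw [this]; rfl
  exact h0.1

/-- Biduality for proper cones. -/
lemma mem_of_forall_dual {V : Type*} [AddCommGroup V] [Module ℝ V] [FiniteDimensional ℝ V]
    {C : Set V} (h : IsProperCone C) {x : V}
    (hx : ∀ f ∈ dualCone C, 0 ≤ f x) : x ∈ C := by
  by_contra hxC
  set n := Module.finrank ℝ V
  let b := Module.finBasis ℝ V
  let e : V ≃ₗ[ℝ] (Fin n → ℝ) := b.equivFun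
  have hclosed : IsClosed (e '' C) := h.2.1 n e
  have hconv : Convex ℝ (e '' C) := h.1.linear_image e.toLinearMap
  have hex : e x ∉ e '' C := by
    intro ⟨a, ha, hee⟩
    exact hxC (e.injective hee ▸ ha)
  obtain ⟨f, u, hfu, hux⟩ := geometric_hahn_banach_closed_point hconv hclosed hex
  -- 0 ∈ image, so f 0 < u, i.e. 0 < u
  have hu0 : 0 < u := by
    have := hfu (e 0) ⟨0, zero_mem_proper h, rfl⟩
    simpa using this
  -- f ≤ 0 on e '' C, by scaling
  have hfneg : ∀ a ∈ C, f (e a) ≤ 0 := by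
    intro a ha
    by_contra hpos
    push_neg at hpos
    obtain ⟨t, ht⟩ := exists_nat_gt (u / f (e a))
    have htpos : (0:ℝ) ≤ (t:ℝ) := by positivity
    have hta : (t:ℝ) • a ∈ C := h.2.2.1 a ha t htpos
    have := hfu (e ((t:ℝ) • a)) ⟨_, hta, rfl⟩
    rw [map_smul] at this
    have : (t:ℝ) * f (e a) < u := by simpa using this
    have h2 : u / f (e a) < t := ht
    have : u < (t:ℝ) * f (e a) := by
      rw [div_lt_iff₀ hpos] at h2; linarith
    linarith
  -- define g ∈ dualCone C with g x < 0
  let g : Module.Dual ℝ V := -(f.toLinearMap ∘ₗ e.toLinearMap)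
  have hg : g ∈ dualCone C := by
    intro a ha
    simp only [g, LinearMap.neg_apply, LinearMap.comp_apply]
    exact neg_nonneg.mpr (hfneg a ha)
  have := hx g hg
  simp only [g, LinearMap.neg_apply, LinearMap.comp_apply] at this
  have hfx : 0 < f (e x) := lt_trans hu0 hux
  simp only [LinearEquiv.coe_coe, ContinuousLinearMap.coe_coe] at this
  linarith

lemma pairTensor_tmul {V1 V2 : Type*} [AddCommGroup V1] [Module ℝ V1]
    [AddCommGroup V2] [Module ℝ V2]
    (f : Module.Dual ℝ V1) (g : Module.Dual ℝ V2) (x : V1) (y : V2) :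
    pairTensor f g (x ⊗ₜ[ℝ] y) = f x * g y := by
  simp [pairTensor, smul_eq_mul]

/-- Key computation: evaluating the image of `z` under `dualDistribEquiv` on a pure tensor. -/
lemma dualDistribEquiv_apply_tmul {V1 V2 : Type*} [AddCommGroup V1] [Module ℝ V1]
    [FiniteDimensional ℝ V1] [AddCommGroup V2] [Module ℝ V2] [FiniteDimensional ℝ V2]
    (z : Module.Dual ℝ V1 ⊗[ℝ] Module.Dual ℝ V2) (x : V1) (y : V2) :
    (TensorProduct.dualDistribEquiv ℝ V1 V2 z) (x ⊗ₜ[ℝ] y)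
      = pairTensor (Module.Dual.eval ℝ V1 x) (Module.Dual.eval ℝ V2 y) z := by
  induction z using TensorProduct.induction_on with
  | zero => simp only [map_zero, LinearMap.zero_apply]
  | tmul f g =>
      rw [pairTensor_tmul]
      simp [TensorProduct.dualDistribEquiv, TensorProduct.dualDistribEquivOfBasis,
        TensorProduct.dualDistrib_apply]
  | add a b ha hb => simp only [map_add, LinearMap.add_apply, ha, hb]

/-- For proper cones, the dual of the minimal tensor product equals the maximal
tensor product of the duals, under the identification of `(V1 ⊗ V2)*` with
`V1* ⊗ V2*`. -/
theorem stmt2 {V1 V2 : Type*} [AddCommGroup V1] [Module ℝ V1] [FiniteDimensional ℝ V1]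
    [AddCommGroup V2] [Module ℝ V2] [FiniteDimensional ℝ V2]
    (C1 : Set V1) (C2 : Set V2)
    (h1 : IsProperCone C1) (h2 : IsProperCone C2) :
    dualCone (minTensor C1 C2) =
      (TensorProduct.dualDistribEquiv ℝ V1 V2) '' maxTensor (dualCone C1) (dualCone C2) := by
  ext φ
  constructor
  · intro hφ
    refine ⟨(TensorProduct.dualDistribEquiv ℝ V1 V2).symm φ, ?_, LinearEquiv.apply_symm_apply _ _⟩
    intro F hF G hG
    set x := (Module.evalEquiv ℝ V1).symm F with hx
    set y := (Module.evalEquiv ℝ V2).symm G with hy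
    have hFx : F = Module.Dual.eval ℝ V1 x := by
      rw [hx, ← Module.evalEquiv_toLinearMap]
      exact ((Module.evalEquiv ℝ V1).apply_symm_apply F).symm
    have hGy : G = Module.Dual.eval ℝ V2 y := by
      rw [hy, ← Module.evalEquiv_toLinearMap]
      exact ((Module.evalEquiv ℝ V2).apply_symm_apply G).symm
    have hxC : x ∈ C1 := by
      apply mem_of_forall_dual h1
      intro f hf
      have := hF f hf
      rwa [hFx] at this
    have hyC : y ∈ C2 := by
      apply mem_of_forall_dual h2
      intro g hg
      have := hG g hg
      rwa [hGy] at this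
    rw [hFx, hGy, ← dualDistribEquiv_apply_tmul]
    rw [LinearEquiv.apply_symm_apply]
    exact hφ _ (subset_convexHull ℝ _ ⟨x, hxC, y, hyC, rfl⟩)
  · rintro ⟨z, hz, rfl⟩
    intro w hw
    have hconv : Convex ℝ {v : V1 ⊗[ℝ] V2 | 0 ≤ (TensorProduct.dualDistribEquiv ℝ V1 V2 z) v} :=
      convex_halfSpace_ge (((TensorProduct.dualDistribEquiv ℝ V1 V2 z)) : V1 ⊗[ℝ] V2 →ₗ[ℝ] ℝ).isLinear 0
    refine convexHull_min ?_ hconv hw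
    rintro _ ⟨x, hx, y, hy, rfl⟩
    rw [Set.mem_setOf_eq, dualDistribEquiv_apply_tmul]
    apply hz
    · intro f hf; exact hf x hx
    · intro g hg; exact hg y hy
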